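/- (Incremental Lemma, monotonicity of skeptical reasoning.) Let (D,W) be an NMU default theory, let q be a literal and let S be a set of literals such that W ∪ S is consistent and S does not influence q in (D,W). If q is in every extension of (D,W), then q is in every extension of (D, W ∪ S). -/

import Mathlib

/-! Propositional formulas -/

inductive Form (V : Type) : Type
  | atom : V → Form V
  | tru  : Form V
  | fals : Form V
  | neg  : Form V → Form V
  | conj : Form V → Form V → Form V
  | disj : Form V → Form V → Form V

/-- Satisfaction of a formula by a valuation. -/
def Form.sat {V : Type} (v : V → Prop) : Form V → Prop
  | .atom a => v a
  | .tru => True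
  | .fals => False
  | .neg φ => ¬ Form.sat v φ
  | .conj φ ψ => Form.sat v φ ∧ Form.sat v ψ
  | .disj φ ψ => Form.sat v φ ∨ Form.sat v ψ

/-- Logical logClosure `T*` of a set of formulas. -/
def logClosure {V : Type} (T : Set (Form V)) : Set (Form V) :=
  { φ | ∀ v : V → Prop, (∀ ψ ∈ T, Form.sat v ψ) → Form.sat v φ }

/-- A default rule `α : β₁,…,β_m / γ` (`pre = none` means the prerequisite is missing). -/
structure Default (V : Type) : Type where
  pre   : Option (Form V)
  justs : List (Form V)
  concl : Form V

/-- The stage sets `E_i` relative to a candidate extension `E`: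
`E_0 = W`, `E_{i+1} = E_i* ∪ {γ | α:β₁,…,β_m/γ ∈ D, α ∈ E_i, ¬β₁ ∉ E, …, ¬β_m ∉ E}`. -/
def extStage {V : Type} (D : Set (Default V)) (W : Set (Form V)) (E : Set (Form V)) :
    ℕ → Set (Form V)
  | 0 => W
  | i + 1 =>
      logClosure (extStage D W E i) ∪
        { φ | ∃ d ∈ D, d.concl = φ ∧ (∀ a ∈ d.pre, a ∈ extStage D W E i) ∧
              ∀ b ∈ d.justs, Form.neg b ∉ E }

/-- `E` is an extension of the default theory `(D, W)`. -/
def IsExtension {V : Type} (D : Set (Default V)) (W : Set (Form V)) (E : Set (Form V)) : Prop :=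
  E = ⋃ i, extStage D W E i

/-- `(D, W) ⊨ φ`: every extension of `(D, W)` contains `φ`. -/
def entails {V : Type} (D : Set (Default V)) (W : Set (Form V)) (φ : Form V) : Prop :=
  ∀ E, IsExtension D W E → φ ∈ E

/-! Literals -/

/-- A literal: a letter together with a sign (`pos = true` means a positive literal). -/
structure Lit (V : Type) : Type where
  letter : V
  pos : Bool

/-- The formula corresponding to a literal. -/
def Lit.toForm {V : Type} (l : Lit V) : Form V :=
  if l.pos then Form.atom l.letter else Form.neg (Form.atom l.letter)

/-- Negation of a literal (so that `¬¬a = a`). -/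
def Lit.negate {V : Type} (l : Lit V) : Lit V := ⟨l.letter, !l.pos⟩

/-- A set of literals is consistent if it contains no complementary pair. -/
def LitConsistent {V : Type} (S : Set (Lit V)) : Prop := ∀ l ∈ S, l.negate ∉ S

/-! Normal mixed unary (NMU) default theories -/

/-- An NMU default `α : β / β` with `α` empty or a single literal and `β` a single literal. -/
structure NMUDefault (V : Type) : Type where
  pre : Option (Lit V)
  concl : Lit V

/-- The general default rule corresponding to an NMU default. -/
def NMUDefault.toDefault {V : Type} (d : NMUDefault V) : Default V :=
  ⟨d.pre.map Lit.toForm, [d.concl.toForm], d.concl.toForm⟩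

/-- `E` is an extension of the NMU theory `(D, W)`. -/
def NMU.IsExtension {V : Type} (D : Set (NMUDefault V)) (W : Set (Lit V))
    (E : Set (Form V)) : Prop :=
  _root_.IsExtension (NMUDefault.toDefault '' D) (Lit.toForm '' W) E

/-- The NMU theory `(D, W)` entails the literal `l`. -/
def NMU.entails {V : Type} (D : Set (NMUDefault V)) (W : Set (Lit V)) (l : Lit V) : Prop :=
  _root_.entails (NMUDefault.toDefault '' D) (Lit.toForm '' W) l.toForm

/-- An NMU theory is normal unary (NU) if every nonempty prerequisite is positive. -/
def IsNU {V : Type} (D : Set (NMUDefault V)) : Prop :=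
  ∀ d ∈ D, ∀ p ∈ d.pre, p.pos = true

/-! Atomic dependency graph -/

/-- Edge `(x, y)` of the atomic dependency graph: `x` occurs in the prerequisite and `y`
in the consequent of some default of `D`. -/
def depEdge {V : Type} (D : Set (NMUDefault V)) (x y : V) : Prop :=
  ∃ d ∈ D, (∃ p ∈ d.pre, p.letter = x) ∧ d.concl.letter = y

/-- There is a path from `x` to `y` in the atomic dependency graph. -/
def depReach {V : Type} (D : Set (NMUDefault V)) : V → V → Prop :=
  Relation.ReflTransGen (depEdge D)

/-- A set of literals `S` influences a literal `l`. -/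
def influences {V : Type} (D : Set (NMUDefault V)) (S : Set (Lit V)) (l : Lit V) : Prop :=
  ∃ t ∈ S, depReach D t.letter l.letter

/-! Auxiliary machinery for the incremental lemma -/

namespace IncAux

variable {V : Type}

theorem negate_negate (l : Lit V) : l.negate.negate = l := by
  cases l with | mk a p => cases p <;> simp [Lit.negate]

theorem negate_ne (l : Lit V) : l.negate ≠ l := by
  cases l with | mk a p => cases p <;> simp [Lit.negate]

theorem negate_letter (l : Lit V) : l.negate.letter = l.letter := rfl

theorem sat_negate (v : V → Prop) (l : Lit V) :
    Form.sat v l.negate.toForm ↔ ¬ Form.sat v l.toForm := by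
  cases l with | mk a p => cases p <;> simp [Lit.negate, Lit.toForm, Form.sat, not_not]

theorem subset_logClosure (T : Set (Form V)) : T ⊆ logClosure T :=
  fun _ hφ _ hv => hv _ hφ

theorem logClosure_mono {T T' : Set (Form V)} (h : T ⊆ T') : logClosure T ⊆ logClosure T' :=
  fun _ hφ v hv => hφ v (fun ψ hψ => hv ψ (h hψ))

theorem logClosure_idem {T : Set (Form V)} : logClosure (logClosure T) ⊆ logClosure T :=
  fun _ hφ v hv => hφ v (fun _ hψ => hψ v hv)

/-- If `l.negate.toForm ∈ X` then `Form.neg l.toForm` is entailed by `X`. -/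
theorem neg_mem_logClosure {X : Set (Form V)} {l : Lit V} (h : l.negate.toForm ∈ X) :
    Form.neg l.toForm ∈ logClosure X := by
  intro v hv
  have := hv _ h
  exact (sat_negate v l).mp this

/-- If `l.toForm ∈ X` then `Form.neg l.negate.toForm` is entailed by `X`. -/
theorem neg_negate_mem_logClosure {X : Set (Form V)} {l : Lit V} (h : l.toForm ∈ X) :
    Form.neg l.negate.toForm ∈ logClosure X := by
  intro v hv
  have := hv _ h
  show ¬ Form.sat v l.negate.toForm
  rw [sat_negate]
  exact not_not_intro this

/-- A literal entailed by a consistent set of literals belongs to it. -/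
theorem mem_of_toForm_mem_logClosure {X : Set (Lit V)} (hX : LitConsistent X) {l : Lit V}
    (h : l.toForm ∈ logClosure (Lit.toForm '' X)) : l ∈ X := by
  by_contra hl
  set v : V → Prop := fun a => (⟨a, true⟩ : Lit V) ∈ X ∨ (l.pos = false ∧ a = l.letter) with hvdef
  have hsat : ∀ ψ ∈ Lit.toForm '' X, Form.sat v ψ := by
    rintro ψ ⟨x, hx, rfl⟩
    rcases x with ⟨a, p⟩
    cases p
    · -- negative literal in X
      show ¬ v a
      rintro (h1 | ⟨h2, h3⟩)
      · exact hX _ hx h1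
      · subst h3
        rcases l with ⟨al, pl⟩
        cases pl
        · exact hl hx
        · simp at h2
    · exact Or.inl hx
  have hs := h v hsat
  rcases l with ⟨a, p⟩
  cases p
  · exact (hs : ¬ v a) (Or.inr ⟨rfl, rfl⟩)
  · rcases (hs : v a) with h1 | ⟨h2, _⟩
    · exact hl h1
    · simp at h2

theorem negate_mem_of_neg_mem_logClosure {X : Set (Lit V)} (hX : LitConsistent X) {l : Lit V}
    (h : Form.neg l.toForm ∈ logClosure (Lit.toForm '' X)) : l.negate ∈ X := by
  apply mem_of_toForm_mem_logClosure hX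
  intro v hv
  rw [sat_negate]
  exact h v hv

end IncAux
namespace IncAux

variable {V : Type}

/-- Literal stages of an extension `E` of `(D, W0)`. -/
def litStage (D : Set (NMUDefault V)) (W0 : Set (Lit V)) (E : Set (Form V)) :
    ℕ → Set (Lit V)
  | 0 => W0
  | i + 1 => litStage D W0 E i ∪
      { l | ∃ d ∈ D, d.concl = l ∧ (∀ p ∈ d.pre, p ∈ litStage D W0 E i) ∧
            Form.neg l.toForm ∉ E }

/-- Grounded stages relative to a filter set `A`. -/
def grdStage (D : Set (NMUDefault V)) (W0 : Set (Lit V)) (A : Set (Lit V)) :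
    ℕ → Set (Lit V)
  | 0 => W0
  | i + 1 => grdStage D W0 A i ∪
      { l | ∃ d ∈ D, d.concl = l ∧ (∀ p ∈ d.pre, p ∈ grdStage D W0 A i) ∧ l ∈ A }

theorem litStage_mono (D : Set (NMUDefault V)) (W0 : Set (Lit V)) (E : Set (Form V)) :
    ∀ {i j : ℕ}, i ≤ j → litStage D W0 E i ⊆ litStage D W0 E j := by
  intro i j hij
  induction j with
  | zero => cases Nat.le_zero.mp hij; exact le_refl _
  | succ j ihj =>
    rcases Nat.le_succ_iff_eq_or_le.mp hij with rfl | hle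
    · exact le_refl _
    · exact (ihj hle).trans (Set.subset_union_left)

theorem grdStage_mono (D : Set (NMUDefault V)) (W0 : Set (Lit V)) (A : Set (Lit V)) :
    ∀ {i j : ℕ}, i ≤ j → grdStage D W0 A i ⊆ grdStage D W0 A j := by
  intro i j hij
  induction j with
  | zero => cases Nat.le_zero.mp hij; exact le_refl _
  | succ j ihj =>
    rcases Nat.le_succ_iff_eq_or_le.mp hij with rfl | hle
    · exact le_refl _
    · exact (ihj hle).trans (Set.subset_union_left)

theorem grdStage_filter_mono (D : Set (NMUDefault V)) (W0 : Set (Lit V)) {A A' : Set (Lit V)}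
    (h : A ⊆ A') : ∀ i, grdStage D W0 A i ⊆ grdStage D W0 A' i := by
  intro i
  induction i with
  | zero => exact le_refl _
  | succ i ih =>
    rintro l (hl | ⟨d, hd, rfl, hp, hA⟩)
    · exact Or.inl (ih hl)
    · exact Or.inr ⟨d, hd, rfl, fun p hp' => ih (hp p hp'), h hA⟩

theorem grdStage_subset (D : Set (NMUDefault V)) (W0 : Set (Lit V)) (A : Set (Lit V)) :
    ∀ i, grdStage D W0 A i ⊆ W0 ∪ A := by
  intro i
  induction i with
  | zero => exact Set.subset_union_left
  | succ i ih =>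
    rintro l (hl | ⟨d, hd, rfl, hp, hA⟩)
    · exact ih hl
    · exact Or.inr hA

theorem grdStage_subset_concl (D : Set (NMUDefault V)) (W0 : Set (Lit V)) (A : Set (Lit V)) :
    ∀ i, grdStage D W0 A i ⊆ W0 ∪ (fun d : NMUDefault V => d.concl) '' D := by
  intro i
  induction i with
  | zero => exact Set.subset_union_left
  | succ i ih =>
    rintro l (hl | ⟨d, hd, rfl, hp, hA⟩)
    · exact ih hl
    · exact Or.inr ⟨d, hd, rfl⟩

end IncAux
namespace IncAux

variable {V : Type}

/-- Image of an NMU default set. -/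
abbrev Dt (D : Set (NMUDefault V)) : Set (Default V) := NMUDefault.toDefault '' D

theorem extStage_succ_left (D : Set (Default V)) (W E : Set (Form V)) (i : ℕ) :
    logClosure (extStage D W E i) ⊆ extStage D W E (i + 1) :=
  Set.subset_union_left

theorem extStage_subset_E {D : Set (Default V)} {W E : Set (Form V)}
    (hE : IsExtension D W E) (i : ℕ) : extStage D W E i ⊆ E := by
  conv_rhs => rw [hE]
  exact Set.subset_iUnion (fun i => extStage D W E i) i

/-- L1: literal stages sit inside the formula stages. -/
theorem litStage_toForm_subset (D : Set (NMUDefault V)) (W0 : Set (Lit V)) (E : Set (Form V)) :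
    ∀ i, Lit.toForm '' litStage D W0 E i ⊆ extStage (Dt D) (Lit.toForm '' W0) E i := by
  intro i
  induction i with
  | zero => exact le_refl _
  | succ i ih =>
    rintro φ ⟨l, hl | ⟨d, hd, rfl, hp, hj⟩, rfl⟩
    · exact extStage_succ_left _ _ _ _ (subset_logClosure _ (ih ⟨l, hl, rfl⟩))
    · refine Or.inr ⟨d.toDefault, ⟨d, hd, rfl⟩, rfl, ?_, ?_⟩
      · intro a ha
        rcases d with ⟨pre, concl⟩
        cases pre with
        | none => simp [NMUDefault.toDefault] at ha
        | some p =>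
          have : a = p.toForm := by
            have := ha; simp [NMUDefault.toDefault] at this; exact this.symm
          subst this
          exact ih ⟨p, hp p rfl, rfl⟩
      · intro b hb
        have : b = d.concl.toForm := by simpa [NMUDefault.toDefault] using hb
        subst this
        exact hj

/-- Consistency of the literal stages. -/
theorem litStage_consistent {D : Set (NMUDefault V)} {W0 : Set (Lit V)} {E : Set (Form V)}
    (hW0 : LitConsistent W0)
    (hE : IsExtension (Dt D) (Lit.toForm '' W0) E) :
    ∀ i, LitConsistent (litStage D W0 E i) := by
  intro i
  induction i with
  | zero => exact hW0
  | succ i ih =>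
    rintro l (hl | ⟨d, hd, rfl, hp, hj⟩) hneg
    · rcases hneg with hneg | ⟨d, hd, hdc, hp, hj⟩
      · exact ih l hl hneg
      · -- l.negate is new, with justification Form.neg l.negate.toForm ∉ E
        apply hj
        have h1 : l.toForm ∈ extStage (Dt D) (Lit.toForm '' W0) E i :=
          litStage_toForm_subset D W0 E i ⟨l, hl, rfl⟩
        have h2 : Form.neg l.negate.toForm ∈ extStage (Dt D) (Lit.toForm '' W0) E (i + 1) :=
          extStage_succ_left _ _ _ _ (neg_negate_mem_logClosure h1)
        exact extStage_subset_E hE (i + 1) h2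
    · -- the new conclusion, with justification Form.neg d.concl.toForm ∉ E
      apply hj
      have h1 : d.concl.negate.toForm ∈ extStage (Dt D) (Lit.toForm '' W0) E (i + 1) :=
        litStage_toForm_subset D W0 E (i + 1) ⟨d.concl.negate, hneg, rfl⟩
      have h2 : Form.neg d.concl.toForm ∈ extStage (Dt D) (Lit.toForm '' W0) E (i + 2) :=
        extStage_succ_left _ _ _ _ (neg_mem_logClosure h1)
      exact extStage_subset_E hE (i + 2) h2

/-- L3: formula stages are contained in the closure of the literal stages. -/
theorem extStage_subset_logClosure {D : Set (NMUDefault V)} {W0 : Set (Lit V)} {E : Set (Form V)}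
    (hW0 : LitConsistent W0)
    (hE : IsExtension (Dt D) (Lit.toForm '' W0) E) :
    ∀ i, extStage (Dt D) (Lit.toForm '' W0) E i ⊆ logClosure (Lit.toForm '' litStage D W0 E i) := by
  intro i
  induction i with
  | zero => exact subset_logClosure _
  | succ i ih =>
    rintro φ (hφ | ⟨dt, ⟨d, hd, rfl⟩, rfl, hp, hj⟩)
    · exact logClosure_mono
        (Set.image_mono (litStage_mono D W0 E (Nat.le_succ i)))
        (logClosure_idem (logClosure_mono ih hφ))
    · have hc : d.concl ∈ litStage D W0 E (i + 1) := by
        refine Or.inr ⟨d, hd, rfl, ?_, ?_⟩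
        · intro p hp'
          have hform : p.toForm ∈ extStage (Dt D) (Lit.toForm '' W0) E i := by
            apply hp
            rcases d with ⟨pre, concl⟩
            cases pre with
            | none => simp at hp'
            | some p' =>
              have : p = p' := by
                have := hp'; simp at this; exact this.symm
              subst this
              simp [NMUDefault.toDefault]
          exact mem_of_toForm_mem_logClosure (litStage_consistent hW0 hE i) (ih hform)
        · exact hj d.concl.toForm (by simp [NMUDefault.toDefault])
      exact subset_logClosure _ ⟨d.concl, hc, rfl⟩

end IncAux
namespace IncAux

variable {V : Type}

/-- The set of literals of an extension, via stages. -/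
def TS (D : Set (NMUDefault V)) (W0 : Set (Lit V)) (E : Set (Form V)) : Set (Lit V) :=
  ⋃ i, litStage D W0 E i

theorem TS_consistent {D : Set (NMUDefault V)} {W0 : Set (Lit V)} {E : Set (Form V)}
    (hW0 : LitConsistent W0) (hE : IsExtension (Dt D) (Lit.toForm '' W0) E) :
    LitConsistent (TS D W0 E) := by
  rintro l hl hneg
  rw [TS, Set.mem_iUnion] at hl hneg
  obtain ⟨i, hi⟩ := hl
  obtain ⟨j, hj⟩ := hneg
  exact litStage_consistent hW0 hE (max i j) l
    (litStage_mono D W0 E (le_max_left i j) hi)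
    (litStage_mono D W0 E (le_max_right i j) hj)

theorem toForm_mem_of_mem_TS {D : Set (NMUDefault V)} {W0 : Set (Lit V)} {E : Set (Form V)}
    (hE : IsExtension (Dt D) (Lit.toForm '' W0) E) {l : Lit V} (hl : l ∈ TS D W0 E) :
    l.toForm ∈ E := by
  rw [TS, Set.mem_iUnion] at hl
  obtain ⟨i, hi⟩ := hl
  exact extStage_subset_E hE i (litStage_toForm_subset D W0 E i ⟨l, hi, rfl⟩)

theorem mem_TS_of_toForm_mem {D : Set (NMUDefault V)} {W0 : Set (Lit V)} {E : Set (Form V)}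
    (hW0 : LitConsistent W0) (hE : IsExtension (Dt D) (Lit.toForm '' W0) E) {l : Lit V}
    (hl : l.toForm ∈ E) : l ∈ TS D W0 E := by
  rw [hE, Set.mem_iUnion] at hl
  obtain ⟨i, hi⟩ := hl
  rw [TS, Set.mem_iUnion]
  exact ⟨i, mem_of_toForm_mem_logClosure (litStage_consistent hW0 hE i)
    (extStage_subset_logClosure hW0 hE i hi)⟩

theorem neg_not_mem_E {D : Set (NMUDefault V)} {W0 : Set (Lit V)} {E : Set (Form V)}
    (hW0 : LitConsistent W0) (hE : IsExtension (Dt D) (Lit.toForm '' W0) E) {l : Lit V}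
    (hneg : l.negate ∉ TS D W0 E) : Form.neg l.toForm ∉ E := by
  intro hmem
  apply hneg
  rw [hE, Set.mem_iUnion] at hmem
  obtain ⟨j, hj⟩ := hmem
  rw [TS, Set.mem_iUnion]
  exact ⟨j, negate_mem_of_neg_mem_logClosure (litStage_consistent hW0 hE j)
    (extStage_subset_logClosure hW0 hE j hj)⟩

theorem TS_closed {D : Set (NMUDefault V)} {W0 : Set (Lit V)} {E : Set (Form V)}
    (hW0 : LitConsistent W0) (hE : IsExtension (Dt D) (Lit.toForm '' W0) E)
    {d : NMUDefault V} (hd : d ∈ D) (hp : ∀ p ∈ d.pre, p ∈ TS D W0 E)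
    (hneg : d.concl.negate ∉ TS D W0 E) : d.concl ∈ TS D W0 E := by
  have hidx : ∃ i, ∀ p ∈ d.pre, p ∈ litStage D W0 E i := by
    rcases hpre : d.pre with _ | p
    · exact ⟨0, by simp [hpre]⟩
    · have := hp p (by rw [hpre]; rfl)
      rw [TS, Set.mem_iUnion] at this
      obtain ⟨i, hi⟩ := this
      refine ⟨i, ?_⟩
      intro p' hp'
      have : p' = p := by have := hp'; simp at this; exact this.symm
      subst this
      exact hi
  obtain ⟨i, hi⟩ := hidx
  rw [TS, Set.mem_iUnion]
  exact ⟨i + 1, Or.inr ⟨d, hd, rfl, hi, neg_not_mem_E hW0 hE hneg⟩⟩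

end IncAux
namespace IncAux

variable {V : Type}

theorem extStage_subset_good {D : Set (NMUDefault V)} {W0 A : Set (Lit V)}
    (hA : LitConsistent A) (hW : W0 ⊆ A)
    (hcl : ∀ d ∈ D, (∀ p ∈ d.pre, p ∈ A) → d.concl.negate ∉ A → d.concl ∈ A) :
    ∀ i, extStage (Dt D) (Lit.toForm '' W0) (logClosure (Lit.toForm '' A)) i ⊆
      logClosure (Lit.toForm '' A) := by
  intro i
  induction i with
  | zero => exact (Set.image_mono hW).trans (subset_logClosure _)
  | succ i ih =>
    rintro φ (hφ | ⟨dt, ⟨d, hd, rfl⟩, rfl, hp, hj⟩)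
    · exact logClosure_idem (logClosure_mono ih hφ)
    · have hpre : ∀ p ∈ d.pre, p ∈ A := by
        intro p hp'
        apply mem_of_toForm_mem_logClosure hA
        apply ih
        apply hp
        rcases hpd : d.pre with _ | p'
        · rw [hpd] at hp'; cases hp'
        · rw [hpd] at hp'
          obtain rfl : p' = p := by simpa using hp'
          simp [NMUDefault.toDefault, hpd]
      have hneg : d.concl.negate ∉ A := by
        intro hmem
        exact hj d.concl.toForm (by simp [NMUDefault.toDefault])
          (neg_mem_logClosure ⟨d.concl.negate, hmem, rfl⟩)
      exact subset_logClosure _ ⟨d.concl, hcl d hd hpre hneg, rfl⟩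

theorem grdStage_toForm_subset_extStage {D : Set (NMUDefault V)} {W0 A : Set (Lit V)}
    (hA : LitConsistent A) :
    ∀ i, Lit.toForm '' grdStage D W0 A i ⊆
      extStage (Dt D) (Lit.toForm '' W0) (logClosure (Lit.toForm '' A)) i := by
  intro i
  induction i with
  | zero => exact le_refl _
  | succ i ih =>
    rintro φ ⟨l, hl | ⟨d, hd, rfl, hp, hmemA⟩, rfl⟩
    · exact extStage_succ_left _ _ _ _ (subset_logClosure _ (ih ⟨l, hl, rfl⟩))
    · refine Or.inr ⟨d.toDefault, ⟨d, hd, rfl⟩, rfl, ?_, ?_⟩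
      · intro a ha
        rcases d with ⟨pre, concl⟩
        cases pre with
        | none => simp [NMUDefault.toDefault] at ha
        | some p =>
          have : a = p.toForm := by
            have := ha; simp [NMUDefault.toDefault] at this; exact this.symm
          subst this
          exact ih ⟨p, hp p rfl, rfl⟩
      · intro b hb
        have : b = d.concl.toForm := by simpa [NMUDefault.toDefault] using hb
        subst this
        intro hmem
        have := negate_mem_of_neg_mem_logClosure hA hmem
        exact hA d.concl hmemA this

theorem extension_of_good {D : Set (NMUDefault V)} {W0 A : Set (Lit V)}
    (hA : LitConsistent A) (hW : W0 ⊆ A)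
    (hcl : ∀ d ∈ D, (∀ p ∈ d.pre, p ∈ A) → d.concl.negate ∉ A → d.concl ∈ A)
    (hfin : ∃ N, A ⊆ grdStage D W0 A N) :
    IsExtension (Dt D) (Lit.toForm '' W0) (logClosure (Lit.toForm '' A)) := by
  obtain ⟨N, hN⟩ := hfin
  apply Set.Subset.antisymm
  · intro φ hφ
    rw [Set.mem_iUnion]
    refine ⟨N + 1, extStage_succ_left _ _ _ _ ?_⟩
    apply logClosure_mono ((Set.image_mono hN).trans (grdStage_toForm_subset_extStage hA N))
    exact hφ
  · apply Set.iUnion_subset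
    exact extStage_subset_good hA hW hcl

end IncAux
namespace IncAux

variable {V : Type}

theorem exists_stage_of_finite {α : Type} {g : ℕ → Set α} (mono : ∀ {i j}, i ≤ j → g i ⊆ g j)
    {F : Set α} (hF : F.Finite) (h : F ⊆ ⋃ i, g i) : ∃ N, F ⊆ g N := by
  classical
  have key : ∀ (t : Finset α), (↑t : Set α) ⊆ (⋃ i, g i) → ∃ N, (↑t : Set α) ⊆ g N := by
    intro t
    induction t using Finset.induction_on with
    | empty => exact fun _ => ⟨0, by simp⟩
    | @insert a s ha ih =>
      intro hsub
      rw [Finset.coe_insert] at hsub ⊢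
      obtain ⟨N1, hN1⟩ := ih ((Set.subset_insert a ↑s).trans hsub)
      obtain ⟨i, hi⟩ := Set.mem_iUnion.mp (hsub (Set.mem_insert a ↑s))
      exact ⟨max i N1, Set.insert_subset_iff.mpr ⟨mono (le_max_left i N1) hi,
        hN1.trans (mono (le_max_right i N1))⟩⟩
  obtain ⟨N, hN⟩ := key hF.toFinset (by rwa [Set.Finite.coe_toFinset])
  rw [Set.Finite.coe_toFinset] at hN
  exact ⟨N, hN⟩

/-- The grounded part (w.r.t. any filter `B`) is grounded w.r.t. itself. -/
theorem grdStage_self (D : Set (NMUDefault V)) (W0 B : Set (Lit V)) :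
    ∀ i, grdStage D W0 B i ⊆ ⋃ j, grdStage D W0 (⋃ k, grdStage D W0 B k) j := by
  intro i
  induction i with
  | zero => exact fun l hl => Set.mem_iUnion.mpr ⟨0, hl⟩
  | succ i ih =>
    rintro l (hl | ⟨d, hd, rfl, hp, hB⟩)
    · exact ih hl
    · have hmem : d.concl ∈ ⋃ k, grdStage D W0 B k :=
        Set.mem_iUnion.mpr ⟨i + 1, Or.inr ⟨d, hd, rfl, hp, hB⟩⟩
      rcases hpd : d.pre with _ | p
      · exact Set.mem_iUnion.mpr ⟨1, Or.inr ⟨d, hd, rfl, (by intro p hp'; rw [hpd] at hp'; simp at hp'),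
          hmem⟩⟩
      · have hp' : p ∈ grdStage D W0 B i := hp p (by rw [hpd]; rfl)
        obtain ⟨j, hj⟩ := Set.mem_iUnion.mp (ih hp')
        refine Set.mem_iUnion.mpr ⟨j + 1, Or.inr ⟨d, hd, rfl, ?_, hmem⟩⟩
        intro p' hp''
        rw [hpd] at hp''
        obtain rfl : p = p' := by simpa using hp''
        exact hj

/-- Decomposition: every literal of the extension of `(D, W ∪ S)` is either grounded
from `W` alone, or its letter is reachable from a letter of `S`. -/
theorem decomposition (D : Set (NMUDefault V)) (W S : Set (Lit V)) (E' : Set (Form V)) :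
    ∀ i, ∀ l ∈ litStage D (W ∪ S) E' i,
      l ∈ (⋃ j, grdStage D W (TS D (W ∪ S) E') j) ∨ ∃ s ∈ S, depReach D s.letter l.letter := by
  intro i
  induction i with
  | zero =>
    rintro l (hl | hl)
    · exact Or.inl (Set.mem_iUnion.mpr ⟨0, hl⟩)
    · exact Or.inr ⟨l, hl, Relation.ReflTransGen.refl⟩
  | succ i ih =>
    rintro l (hl | ⟨d, hd, rfl, hp, hj⟩)
    · exact ih l hl
    · have hT' : d.concl ∈ TS D (W ∪ S) E' :=
        Set.mem_iUnion.mpr ⟨i + 1, Or.inr ⟨d, hd, rfl, hp, hj⟩⟩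
      rcases hpd : d.pre with _ | p
      · exact Or.inl (Set.mem_iUnion.mpr ⟨1, Or.inr ⟨d, hd, rfl,
          (by intro p hp'; rw [hpd] at hp'; simp at hp'), hT'⟩⟩)
      · have hpi : p ∈ litStage D (W ∪ S) E' i := hp p (by rw [hpd]; rfl)
        rcases ih p hpi with hgrd | ⟨s, hs, hreach⟩
        · obtain ⟨j, hj'⟩ := Set.mem_iUnion.mp hgrd
          refine Or.inl (Set.mem_iUnion.mpr ⟨j + 1, Or.inr ⟨d, hd, rfl, ?_, hT'⟩⟩)
          intro p' hp''
          rw [hpd] at hp''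
          obtain rfl : p = p' := by simpa using hp''
          exact hj'
        · refine Or.inr ⟨s, hs, hreach.tail ⟨d, hd, ⟨p, by rw [hpd]; rfl, rfl⟩, rfl⟩⟩

/-- Literals of `A*` on letters not reachable from `S` belong to the extension's literals. -/
theorem U_lemma {D : Set (NMUDefault V)} {W S : Set (Lit V)} {E' : Set (Form V)}
    (hcons : LitConsistent (W ∪ S))
    (hE' : IsExtension (Dt D) (Lit.toForm '' (W ∪ S)) E')
    {Astar : Set (Lit V)}
    (hTA : (⋃ j, grdStage D W (TS D (W ∪ S) E') j) ⊆ Astar)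
    (hA : LitConsistent Astar) :
    ∀ i, ∀ l ∈ grdStage D W Astar i,
      (¬ ∃ s ∈ S, depReach D s.letter l.letter) → l ∈ TS D (W ∪ S) E' := by
  intro i
  induction i with
  | zero => exact fun l hl _ => Set.mem_iUnion.mpr ⟨0, Or.inl hl⟩
  | succ i ih =>
    rintro l (hl | ⟨d, hd, rfl, hp, hmemA⟩) hnr
    · exact ih l hl hnr
    · have hneg : d.concl.negate ∉ TS D (W ∪ S) E' := by
        intro hmem
        obtain ⟨i', hi'⟩ := Set.mem_iUnion.mp hmem
        rcases decomposition D W S E' i' d.concl.negate hi' with hgrd | ⟨s, hs, hreach⟩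
        · exact hA d.concl hmemA (hTA hgrd)
        · exact hnr ⟨s, hs, by rw [negate_letter] at hreach; exact hreach⟩
      rcases hpd : d.pre with _ | p
      · refine TS_closed hcons hE' hd ?_ hneg
        rw [hpd]; intro p hp'; simp at hp'
      · have hpi : p ∈ grdStage D W Astar i := hp p (by rw [hpd]; rfl)
        have hedge : depEdge D p.letter d.concl.letter := ⟨d, hd, ⟨p, by rw [hpd]; rfl, rfl⟩, rfl⟩
        have hnp : ¬ ∃ s ∈ S, depReach D s.letter p.letter := by
          rintro ⟨s, hs, hr⟩
          exact hnr ⟨s, hs, hr.tail hedge⟩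
        have hpT' : p ∈ TS D (W ∪ S) E' := ih p hpi hnp
        refine TS_closed hcons hE' hd ?_ hneg
        rw [hpd]
        intro p' hp''
        obtain rfl : p = p' := by simpa using hp''
        exact hpT'

end IncAux
open IncAux in
/-- Incremental Lemma, monotonicity of skeptical reasoning. -/
theorem incremental_skeptical {V : Type} (D : Set (NMUDefault V)) (W S : Set (Lit V)) (q : Lit V)
    (hD : D.Finite) (hW : W.Finite) (hS : S.Finite)
    (hcons : LitConsistent (W ∪ S))
    (hinf : ¬ influences D S q)
    (h : ∀ E, NMU.IsExtension D W E → q.toForm ∈ E) :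
    ∀ E, NMU.IsExtension D (W ∪ S) E → q.toForm ∈ E := by
  intro E' hE'
  have hE'' : IsExtension (Dt D) (Lit.toForm '' (W ∪ S)) E' := hE'
  have hT'cons : LitConsistent (TS D (W ∪ S) E') := TS_consistent hcons hE''
  have hWT : W ⊆ ⋃ j, grdStage D W (TS D (W ∪ S) E') j := fun l hl => Set.mem_iUnion.mpr ⟨0, hl⟩
  have hTT' : (⋃ j, grdStage D W (TS D (W ∪ S) E') j) ⊆ TS D (W ∪ S) E' := by
    apply Set.iUnion_subset
    intro j
    refine (grdStage_subset D W _ j).trans ?_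
    rintro l (hl | hl)
    · exact Set.mem_iUnion.mpr ⟨0, Or.inl hl⟩
    · exact hl
  set 𝒜 : Set (Set (Lit V)) :=
    {A | LitConsistent A ∧ (⋃ j, grdStage D W (TS D (W ∪ S) E') j) ⊆ A ∧
      A ⊆ ⋃ j, grdStage D W A j} with h𝒜def
  have hT𝒜 : (⋃ j, grdStage D W (TS D (W ∪ S) E') j) ∈ 𝒜 :=
    ⟨fun l hl hn => hT'cons l (hTT' hl) (hTT' hn), le_refl _,
      Set.iUnion_subset (grdStage_self D W _)⟩
  have hKfin : (W ∪ (fun d : NMUDefault V => d.concl) '' D).Finite := hW.union (hD.image _)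
  have h𝒜K : ∀ A ∈ 𝒜, A ⊆ W ∪ (fun d : NMUDefault V => d.concl) '' D := by
    rintro A ⟨-, -, hg⟩
    exact hg.trans (Set.iUnion_subset (grdStage_subset_concl D W A))
  have h𝒜fin : 𝒜.Finite := Set.Finite.subset hKfin.finite_subsets h𝒜K
  obtain ⟨Astar, hA𝒜, hmax⟩ := Set.Finite.exists_maximalFor id 𝒜 h𝒜fin ⟨_, hT𝒜⟩
  obtain ⟨hAcons, hTA, hAg⟩ := hA𝒜
  have hclosed : ∀ d ∈ D, (∀ p ∈ d.pre, p ∈ Astar) → d.concl.negate ∉ Astar →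
      d.concl ∈ Astar := by
    intro d hd hpre hneg
    by_contra hc
    have hplus : insert d.concl Astar ∈ 𝒜 := by
      refine ⟨?_, hTA.trans (Set.subset_insert _ _), ?_⟩
      · intro l hl hn
        rcases Set.mem_insert_iff.mp hl with rfl | hl
        · rcases Set.mem_insert_iff.mp hn with hn | hn
          · exact negate_ne _ hn
          · exact hneg hn
        · rcases Set.mem_insert_iff.mp hn with hn | hn
          · apply hneg
            have hld : l = d.concl.negate := by rw [← hn, negate_negate]
            rw [← hld]; exact hl
          · exact hAcons l hl hn
      · intro l hl
        rcases Set.mem_insert_iff.mp hl with rfl | hl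
        · rcases hpd : d.pre with _ | p
          · exact Set.mem_iUnion.mpr ⟨1, Or.inr ⟨d, hd, rfl,
              (by intro p hp'; rw [hpd] at hp'; simp at hp'), Set.mem_insert _ _⟩⟩
          · have hpA : p ∈ Astar := hpre p (by rw [hpd]; rfl)
            obtain ⟨j, hj⟩ := Set.mem_iUnion.mp (hAg hpA)
            refine Set.mem_iUnion.mpr ⟨j + 1, Or.inr ⟨d, hd, rfl, ?_, Set.mem_insert _ _⟩⟩
            intro p' hp''
            rw [hpd] at hp''
            obtain rfl : p = p' := by simpa using hp''
            exact grdStage_filter_mono D W (Set.subset_insert _ _) j hj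
        · obtain ⟨j, hj⟩ := Set.mem_iUnion.mp (hAg hl)
          exact Set.mem_iUnion.mpr ⟨j, grdStage_filter_mono D W (Set.subset_insert _ _) j hj⟩
    have heq : Astar = insert d.concl Astar := Set.Subset.antisymm (Set.subset_insert _ _) (hmax hplus (Set.subset_insert d.concl Astar))
    exact hc (heq ▸ Set.mem_insert d.concl Astar)
  have hfinN : ∃ N, Astar ⊆ grdStage D W Astar N :=
    exists_stage_of_finite (fun hij => grdStage_mono D W Astar hij)
      (hKfin.subset (h𝒜K Astar ⟨hAcons, hTA, hAg⟩)) hAg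
  have hWA : W ⊆ Astar := hWT.trans hTA
  have hext : NMU.IsExtension D W (logClosure (Lit.toForm '' Astar)) :=
    extension_of_good hAcons hWA hclosed hfinN
  have hq : q.toForm ∈ logClosure (Lit.toForm '' Astar) := h _ hext
  have hqA : q ∈ Astar := mem_of_toForm_mem_logClosure hAcons hq
  obtain ⟨i, hi⟩ := Set.mem_iUnion.mp (hAg hqA)
  have hqT' : q ∈ TS D (W ∪ S) E' := U_lemma hcons hE'' hTA hAcons i q hi hinf
  exact toForm_mem_of_mem_TS hE'' hqT'
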